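/- Let Γ ⊆ ℝⁿ be an n-attractor and suppose ∂Γ is contained in a compact d-set for some d with n − 1 ≤ d < n. Let Ω denote either int Γ or Γᶜ = ℝⁿ ∖ Γ. Then Ω belongs to the class D^t for every t with 0 < t < n − d. -/

import Mathlib

open Metric MeasureTheory Set
open scoped ENNReal


open Metric MeasureTheory Set
open scoped ENNReal

lemma aux_finite_hausdorff {n : ℕ} {d : ℝ} {B : Set (EuclideanSpace ℝ (Fin n))}
    (hBcomp : IsCompact B) {c₂ : ℝ}
    (hup : ∀ x ∈ B, μH[d] (B ∩ Metric.closedBall x 1) ≤ ENNReal.ofReal c₂) :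
    ∃ H : ℝ, 0 ≤ H ∧ μH[d] B ≤ ENNReal.ofReal H := by
  obtain ⟨T, hTB, hTfin, hTcov⟩ := hBcomp.finite_cover_balls (e := 1) one_pos
  refine ⟨hTfin.toFinset.card * max c₂ 0, by positivity, ?_⟩
  calc μH[d] B ≤ μH[d] (⋃ x ∈ hTfin.toFinset, B ∩ Metric.closedBall x 1) := by
        refine measure_mono fun y hy => ?_
        obtain ⟨x, hx1, hx2⟩ := Set.mem_iUnion₂.1 (hTcov hy)
        exact Set.mem_iUnion₂.2 ⟨x, by simpa using hx1, hy, ball_subset_closedBall hx2⟩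
    _ ≤ ∑ x ∈ hTfin.toFinset, μH[d] (B ∩ Metric.closedBall x 1) :=
        measure_biUnion_finset_le _ _
    _ ≤ ∑ _x ∈ hTfin.toFinset, ENNReal.ofReal (max c₂ 0) := by
        refine Finset.sum_le_sum fun x hx => ?_
        exact (hup x (hTB (by simpa using hx))).trans
          (ENNReal.ofReal_le_ofReal (le_max_left _ _))
    _ = hTfin.toFinset.card * ENNReal.ofReal (max c₂ 0) := by
        rw [Finset.sum_const, nsmul_eq_mul]
    _ ≤ ENNReal.ofReal (hTfin.toFinset.card * max c₂ 0) := by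
        rw [ENNReal.ofReal_mul (by positivity)]
        simp

/-- Volume of a δ-neighborhood of F inside a ball of radius r centered on F. -/
lemma aux_nbhd_vol {n : ℕ} {d : ℝ} (hd0 : 0 ≤ d)
    {B F : Set (EuclideanSpace ℝ (Fin n))}
    (hBcomp : IsCompact B) (hFclosed : IsClosed F) (hFB : F ⊆ B)
    {c₁ c₂ : ℝ} (hc₁ : 0 < c₁)
    (hlow : ∀ x ∈ B, ∀ r : ℝ, 0 < r → r ≤ 1 →
      ENNReal.ofReal (c₁ * r ^ d) ≤ μH[d] (B ∩ Metric.closedBall x r))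
    (hup : ∀ x ∈ B, ∀ r : ℝ, 0 < r → r ≤ 1 →
      μH[d] (B ∩ Metric.closedBall x r) ≤ ENNReal.ofReal (c₂ * r ^ d)) :
    ∃ C₀ : ℝ, 0 < C₀ ∧ ∀ x ∈ F, ∀ r δ : ℝ, 0 < δ → δ ≤ r → r ≤ 1 →
      volume (Metric.closedBall x r ∩ {y | Metric.infDist y F ≤ δ}) ≤
        ENNReal.ofReal (C₀ * δ ^ ((n : ℝ) - d) * r ^ d) := by
  have hBup1 : ∀ x ∈ B, μH[d] (B ∩ Metric.closedBall x 1) ≤ ENNReal.ofReal c₂ := by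
    intro x hx
    simpa using hup x hx 1 one_pos le_rfl
  obtain ⟨H, hH0, hHB⟩ := aux_finite_hausdorff hBcomp hBup1
  set v : ℝ := (volume (Metric.closedBall (0 : EuclideanSpace ℝ (Fin n)) 1)).toReal + 1 with hv
  have hv0 : 0 < v := by positivity
  have hvle : volume (Metric.closedBall (0 : EuclideanSpace ℝ (Fin n)) 1) ≤ ENNReal.ofReal v := by
    rw [hv]
    exact (ENNReal.le_ofReal_iff_toReal_le (measure_closedBall_lt_top).ne (by positivity)).2
      (by linarith)
  set K : ℝ := max (c₂ * 3 ^ d) (H * 3 ^ d) + 1 with hK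
  have hK0 : 0 < K := by
    have : (0:ℝ) ≤ max (c₂ * 3 ^ d) (H * 3 ^ d) := le_max_of_le_right (by positivity)
    linarith
  have hball3 : ∀ x ∈ B, ∀ r : ℝ, 0 < r → r ≤ 1 →
      μH[d] (B ∩ Metric.closedBall x (3 * r)) ≤ ENNReal.ofReal (K * r ^ d) := by
    intro x hx r hr0 hr1
    rcases le_or_gt (3 * r) 1 with h3 | h3
    · refine (hup x hx (3 * r) (by linarith) h3).trans (ENNReal.ofReal_le_ofReal ?_)
      rw [Real.mul_rpow (by norm_num) hr0.le]
      have h1 : c₂ * (3 ^ d * r ^ d) ≤ max (c₂ * 3 ^ d) (H * 3 ^ d) * r ^ d := by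
        rw [← mul_assoc]
        exact mul_le_mul_of_nonneg_right (le_max_left _ _) (Real.rpow_nonneg hr0.le d)
      nlinarith [Real.rpow_nonneg hr0.le d]
    · refine (measure_mono Set.inter_subset_left).trans (hHB.trans (ENNReal.ofReal_le_ofReal ?_))
      have h3d : (1:ℝ) ≤ (3 * r) ^ d := Real.one_le_rpow h3.le hd0
      rw [Real.mul_rpow (by norm_num) hr0.le] at h3d
      have h1 : H ≤ H * (3 ^ d * r ^ d) := le_mul_of_one_le_right hH0 h3d
      have h2 : H * (3 ^ d * r ^ d) ≤ max (c₂ * 3 ^ d) (H * 3 ^ d) * r ^ d := by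
        rw [← mul_assoc]
        exact mul_le_mul_of_nonneg_right (le_max_right _ _) (Real.rpow_nonneg hr0.le d)
      nlinarith [Real.rpow_nonneg hr0.le d]
  refine ⟨K / c₁ * 4 ^ n * v, by positivity, ?_⟩
  intro x hxF r δ hδ0 hδr hr1
  have hr0 : 0 < r := lt_of_lt_of_le hδ0 hδr
  have hδ1 : δ ≤ 1 := hδr.trans hr1
  have hFne : F.Nonempty := ⟨x, hxF⟩
  set E : Set (EuclideanSpace ℝ (Fin n)) := F ∩ Metric.closedBall x (2 * r) with hE
  obtain ⟨u, huE, hudisj, hucov⟩ :=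
    Vitali.exists_disjoint_subfamily_covering_enlargement_closedBall E
      (id) (fun _ => δ) δ (fun _ _ => le_rfl) 4 (by norm_num)
  have huB : ∀ b ∈ u, b ∈ B := fun b hb => hFB (huE hb).1
  -- disjointness of the small balls intersected with B
  have hdisjB : (u.PairwiseDisjoint fun b => B ∩ Metric.closedBall b δ) := by
    intro b hb b' hb' hne
    exact Disjoint.mono Set.inter_subset_right Set.inter_subset_right (hudisj hb hb' hne)
  have hmeas : ∀ b : EuclideanSpace ℝ (Fin n), MeasurableSet (B ∩ Metric.closedBall b δ) :=
    fun b => hBcomp.isClosed.measurableSet.inter measurableSet_closedBall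
  -- small balls lie in B ∩ closedBall x (3r)
  have hsub3 : ∀ b ∈ u, B ∩ Metric.closedBall b δ ⊆ B ∩ Metric.closedBall x (3 * r) := by
    intro b hb y hy
    refine ⟨hy.1, ?_⟩
    have hbx : dist b x ≤ 2 * r := (huE hb).2
    have : dist y b ≤ δ := hy.2
    have := dist_triangle y b x
    simp only [Metric.mem_closedBall]
    linarith
  -- lower bound for each small ball
  have hlowb : ∀ b ∈ u, ENNReal.ofReal (c₁ * δ ^ d) ≤ μH[d] (B ∩ Metric.closedBall b δ) :=
    fun b hb => hlow b (huB b hb) δ hδ0 hδ1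
  have hc₁δ : (0:ℝ) < c₁ * δ ^ d := by positivity
  -- u is finite
  have hufin : u.Finite := by
    by_contra hinf
    have hinf' : u.Infinite := hinf
    set e := hinf'.natEmbedding
    have hdisje : Pairwise (Function.onFun Disjoint fun i : ℕ => B ∩ Metric.closedBall (e i) δ) := by
      intro i j hij
      exact hdisjB (e i).2 (e j).2 (fun h => hij (e.injective (Subtype.ext h)))
    have htop : (⊤ : ℝ≥0∞) ≤ μH[d] (⋃ i : ℕ, B ∩ Metric.closedBall (e i) δ) := by
      rw [measure_iUnion hdisje fun i => hmeas _]
      calc (⊤ : ℝ≥0∞) = ∑' _ : ℕ, ENNReal.ofReal (c₁ * δ ^ d) :=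
            (ENNReal.tsum_const_eq_top_of_ne_zero (ENNReal.ofReal_pos.2 hc₁δ).ne').symm
        _ ≤ _ := ENNReal.tsum_le_tsum fun i => hlowb _ (e i).2
    have hle : μH[d] (⋃ i : ℕ, B ∩ Metric.closedBall (e i) δ) ≤ ENNReal.ofReal (K * r ^ d) := by
      refine (measure_mono ?_).trans (hball3 x (hFB hxF) r hr0 hr1)
      exact Set.iUnion_subset fun i => hsub3 _ (e i).2
    exact (ENNReal.ofReal_lt_top).not_ge (htop.trans hle)
  -- cardinality bound
  set N := hufin.toFinset.card with hN
  have hcard : (N : ℝ≥0∞) * ENNReal.ofReal (c₁ * δ ^ d) ≤ ENNReal.ofReal (K * r ^ d) := by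
    calc (N : ℝ≥0∞) * ENNReal.ofReal (c₁ * δ ^ d)
        = ∑ _b ∈ hufin.toFinset, ENNReal.ofReal (c₁ * δ ^ d) := by
          rw [Finset.sum_const, nsmul_eq_mul]
      _ ≤ ∑ b ∈ hufin.toFinset, μH[d] (B ∩ Metric.closedBall b δ) :=
          Finset.sum_le_sum fun b hb => hlowb b (hufin.mem_toFinset.1 hb)
      _ = μH[d] (⋃ b ∈ hufin.toFinset, B ∩ Metric.closedBall b δ) := by
          rw [measure_biUnion_finset (by simpa using hdisjB) fun b _ => hmeas b]
      _ ≤ ENNReal.ofReal (K * r ^ d) := by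
          refine (measure_mono ?_).trans (hball3 x (hFB hxF) r hr0 hr1)
          exact Set.iUnion₂_subset fun b hb => hsub3 b (hufin.mem_toFinset.1 hb)
  -- covering of S by the enlarged balls
  have hScov : Metric.closedBall x r ∩ {y | Metric.infDist y F ≤ δ} ⊆
      ⋃ b ∈ hufin.toFinset, Metric.closedBall b (4 * δ) := by
    rintro y ⟨hy1, hy2⟩
    obtain ⟨z, hzF, hzd⟩ := hFclosed.exists_infDist_eq_dist hFne y
    have hyz : dist y z ≤ δ := hzd ▸ hy2
    have hzE : z ∈ E := by
      refine ⟨hzF, ?_⟩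
      have := dist_triangle z y x
      have h1 : dist y x ≤ r := hy1
      simp only [Metric.mem_closedBall]
      rw [dist_comm] at hyz
      linarith
    obtain ⟨b, hbu, hbsub⟩ := hucov z hzE
    have : y ∈ Metric.closedBall (id z) δ := by simpa [dist_comm] using hyz
    exact Set.mem_iUnion₂.2 ⟨b, hufin.mem_toFinset.2 hbu, hbsub this⟩
  -- volume bound
  have hvol4 : ∀ b : EuclideanSpace ℝ (Fin n),
      volume (Metric.closedBall b (4 * δ)) ≤ ENNReal.ofReal ((4 * δ) ^ n * v) := by
    intro b
    rw [Measure.addHaar_closedBall' volume b (by positivity), finrank_euclideanSpace_fin,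
      ENNReal.ofReal_mul (by positivity)]
    exact mul_le_mul_right hvle _
  calc volume (Metric.closedBall x r ∩ {y | Metric.infDist y F ≤ δ})
      ≤ volume (⋃ b ∈ hufin.toFinset, Metric.closedBall b (4 * δ)) := measure_mono hScov
    _ ≤ ∑ b ∈ hufin.toFinset, volume (Metric.closedBall b (4 * δ)) :=
        measure_biUnion_finset_le _ _
    _ ≤ ∑ _b ∈ hufin.toFinset, ENNReal.ofReal ((4 * δ) ^ n * v) :=
        Finset.sum_le_sum fun b _ => hvol4 b
    _ = (N : ℝ≥0∞) * ENNReal.ofReal ((4 * δ) ^ n * v) := by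
        rw [Finset.sum_const, nsmul_eq_mul]
    _ = (N : ℝ≥0∞) * ENNReal.ofReal (c₁ * δ ^ d) *
        ENNReal.ofReal ((4 * δ) ^ n * v / (c₁ * δ ^ d)) := by
        rw [mul_assoc, ← ENNReal.ofReal_mul hc₁δ.le,
          mul_div_cancel₀ _ hc₁δ.ne']
    _ ≤ ENNReal.ofReal (K * r ^ d) * ENNReal.ofReal ((4 * δ) ^ n * v / (c₁ * δ ^ d)) :=
        mul_le_mul_left hcard _
    _ = ENNReal.ofReal (K * r ^ d * ((4 * δ) ^ n * v / (c₁ * δ ^ d))) :=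
        (ENNReal.ofReal_mul (by positivity : (0:ℝ) ≤ K * r ^ d)).symm
    _ ≤ ENNReal.ofReal (K / c₁ * 4 ^ n * v * δ ^ ((n : ℝ) - d) * r ^ d) := by
        refine ENNReal.ofReal_le_ofReal (le_of_eq ?_)
        have hδnd : δ ^ ((n : ℝ) - d) = δ ^ (n : ℕ) / δ ^ d := by
          rw [Real.rpow_sub hδ0, Real.rpow_natCast]
        rw [hδnd, mul_pow]
        have hδd : (0:ℝ) < δ ^ d := Real.rpow_pos_of_pos hδ0 d
        field_simp

/-- Let Γ be an n-attractor with ∂Γ contained in a compact d-set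
for some n − 1 ≤ d < n, and let Ω be either int Γ or Γᶜ. Then Ω ∈ D^t for all
0 < t < n − d; i.e., ∃ C > 0 with ∫_{B(x,r)∖∂Ω} dist(y,∂Ω)^{−t} dy ≤ C·r^{n−t}
for all x ∈ ∂Ω and 0 < r ≤ 1. -/
theorem statement17
    (n : ℕ) (hn : 1 ≤ n)
    (M : ℕ) (hM : 2 ≤ M)
    (s : Fin M → EuclideanSpace ℝ (Fin n) → EuclideanSpace ℝ (Fin n))
    (ρ : Fin M → ℝ)
    (hρ : ∀ m, ρ m ∈ Set.Ioo (0 : ℝ) 1)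
    (hsim : ∀ m x y, dist (s m x) (s m y) = ρ m * dist x y)
    (Γ : Set (EuclideanSpace ℝ (Fin n)))
    (hΓne : Γ.Nonempty) (hΓcomp : IsCompact Γ)
    (hattr : Γ = ⋃ m, s m '' Γ)
    (hOSC : ∃ O : Set (EuclideanSpace ℝ (Fin n)), O.Nonempty ∧ IsOpen O ∧
      Bornology.IsBounded O ∧ (⋃ m, s m '' O) ⊆ O ∧
      ∀ m m', m ≠ m' → Disjoint (s m '' O) (s m' '' O))
    (hsum : ∑ m, ρ m ^ n = 1)
    (d : ℝ) (hd1 : (n : ℝ) - 1 ≤ d) (hdn : d < n)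
    (B : Set (EuclideanSpace ℝ (Fin n)))
    (hBcomp : IsCompact B) (hsub : frontier Γ ⊆ B)
    (hdset : ∃ c₁ c₂ : ℝ, 0 < c₁ ∧ c₁ ≤ c₂ ∧
      ∀ x ∈ B, ∀ r : ℝ, 0 < r → r ≤ 1 →
        ENNReal.ofReal (c₁ * r ^ d) ≤ μH[d] (B ∩ Metric.closedBall x r) ∧
        μH[d] (B ∩ Metric.closedBall x r) ≤ ENNReal.ofReal (c₂ * r ^ d))
    (Ω : Set (EuclideanSpace ℝ (Fin n)))
    (hΩ : Ω = interior Γ ∨ Ω = Γᶜ) :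
    ∀ t : ℝ, 0 < t → t < (n : ℝ) - d →
      ∃ C : ℝ, 0 < C ∧ ∀ x ∈ frontier Ω, ∀ r : ℝ, 0 < r → r ≤ 1 →
        (∫⁻ y in Metric.closedBall x r \ frontier Ω,
          ENNReal.ofReal (Metric.infDist y (frontier Ω)) ^ (-t))
          ≤ ENNReal.ofReal (C * r ^ ((n : ℝ) - t)) := by
  intro t ht0 ht1
  set F := frontier Ω with hF
  have hFsub : F ⊆ frontier Γ := by
    rcases hΩ with h | h
    · rw [hF, h]; exact frontier_interior_subset
    · rw [hF, h, frontier_compl]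
  have hFB : F ⊆ B := hFsub.trans hsub
  have hFclosed : IsClosed F := isClosed_frontier
  have hn1 : (1:ℝ) ≤ (n:ℝ) := by exact_mod_cast hn
  have hd0 : (0:ℝ) ≤ d := by linarith
  obtain ⟨c₁, c₂, hc₁, hc₁₂, hdub⟩ := hdset
  have hlow : ∀ x ∈ B, ∀ r : ℝ, 0 < r → r ≤ 1 →
      ENNReal.ofReal (c₁ * r ^ d) ≤ μH[d] (B ∩ Metric.closedBall x r) :=
    fun x hx r h1 h2 => (hdub x hx r h1 h2).1
  have hup : ∀ x ∈ B, ∀ r : ℝ, 0 < r → r ≤ 1 →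
      μH[d] (B ∩ Metric.closedBall x r) ≤ ENNReal.ofReal (c₂ * r ^ d) :=
    fun x hx r h1 h2 => (hdub x hx r h1 h2).2
  obtain ⟨C₀, hC₀, hvol⟩ := aux_nbhd_vol hd0 hBcomp hFclosed hFB hc₁ hlow hup
  set q : ℝ := (2:ℝ) ^ (t + d - (n:ℝ)) with hq
  have hq0 : 0 < q := Real.rpow_pos_of_pos two_pos _
  have hq1 : q < 1 := Real.rpow_lt_one_of_one_lt_of_neg one_lt_two (by linarith)
  have h2t : (0:ℝ) < (2:ℝ) ^ t := Real.rpow_pos_of_pos two_pos _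
  refine ⟨C₀ * 2 ^ t * (1 - q)⁻¹,
    mul_pos (mul_pos hC₀ h2t) (inv_pos.2 (by linarith)), ?_⟩
  intro x hxF r hr0 hr1
  have hFne : F.Nonempty := ⟨x, hxF⟩
  set δ : ℕ → ℝ := fun k => r / 2 ^ k with hδ
  have hδ0 : ∀ k, 0 < δ k := fun k => by positivity
  have hδle : ∀ k, δ k ≤ r := fun k => by
    have h1 : (1:ℝ) ≤ 2 ^ k := one_le_pow₀ (by norm_num)
    exact div_le_self hr0.le h1
  have hδr : ∀ j : ℕ, δ j = r * (2:ℝ) ^ (-(j:ℝ)) := by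
    intro j
    rw [Real.rpow_neg (by norm_num), Real.rpow_natCast]
    simp [hδ, div_eq_mul_inv]
  set A : ℕ → Set (EuclideanSpace ℝ (Fin n)) := fun k =>
    (Metric.closedBall x r \ F) ∩
      {y | δ (k+1) < Metric.infDist y F ∧ Metric.infDist y F ≤ δ k} with hA
  have hcover : Metric.closedBall x r \ F ⊆ ⋃ k, A k := by
    intro y hy
    have hy1 : dist y x ≤ r := hy.1
    have hε0 : 0 < Metric.infDist y F := (hFclosed.notMem_iff_infDist_pos hFne).1 hy.2
    have hεr : Metric.infDist y F ≤ r := (Metric.infDist_le_dist_of_mem hxF).trans hy1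
    have hex : ∃ k, δ (k+1) < Metric.infDist y F := by
      obtain ⟨m, hm⟩ := pow_unbounded_of_one_lt (r / Metric.infDist y F)
        (one_lt_two (α := ℝ))
      have h2m : (2:ℝ) ^ m ≤ 2 ^ (m+1) := by
        rw [pow_succ]
        nlinarith [pow_pos (two_pos (α := ℝ)) m]
      have h1 : r / Metric.infDist y F < 2 ^ (m+1) := hm.trans_le h2m
      have h2 : r < 2 ^ (m+1) * Metric.infDist y F := (div_lt_iff₀ hε0).1 h1
      refine ⟨m, ?_⟩
      rw [hδ]
      rw [div_lt_iff₀ (by positivity)]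
      linarith [mul_comm ((2:ℝ) ^ (m+1)) (Metric.infDist y F)]
    refine Set.mem_iUnion.2 ⟨Nat.find hex, hy, Nat.find_spec hex, ?_⟩
    rcases Nat.eq_zero_or_pos (Nat.find hex) with h0 | hpos
    · rw [h0]
      simpa [hδ] using hεr
    · have hmin := Nat.find_min hex (Nat.sub_lt hpos one_pos)
      push_neg at hmin
      have heq : Nat.find hex - 1 + 1 = Nat.find hex := Nat.succ_pred_eq_of_pos hpos
      rwa [heq] at hmin
  have key : ∀ k : ℕ, (∫⁻ y in A k, ENNReal.ofReal (Metric.infDist y F) ^ (-t)) ≤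
      ENNReal.ofReal (C₀ * 2 ^ t * r ^ ((n:ℝ) - t)) * ENNReal.ofReal q ^ k := by
    intro k
    have hδk1 : 0 < δ (k+1) := hδ0 _
    have step1 : (∫⁻ y in A k, ENNReal.ofReal (Metric.infDist y F) ^ (-t)) ≤
        ENNReal.ofReal (δ (k+1) ^ (-t)) * volume (A k) := by
      calc (∫⁻ y in A k, ENNReal.ofReal (Metric.infDist y F) ^ (-t))
          ≤ ∫⁻ _y in A k, ENNReal.ofReal (δ (k+1) ^ (-t)) := by
            refine setLIntegral_mono measurable_const fun y hy => ?_
            have h1 : δ (k+1) < Metric.infDist y F := hy.2.1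
            rw [ENNReal.ofReal_rpow_of_pos (hδk1.trans h1)]
            exact ENNReal.ofReal_le_ofReal
              (Real.rpow_le_rpow_of_nonpos hδk1 h1.le (by linarith))
        _ = ENNReal.ofReal (δ (k+1) ^ (-t)) * volume (A k) := setLIntegral_const _ _
    have step2 : volume (A k) ≤ ENNReal.ofReal (C₀ * δ k ^ ((n:ℝ) - d) * r ^ d) := by
      refine (measure_mono ?_).trans (hvol x hxF r (δ k) (hδ0 k) (hδle k) hr1)
      rintro y ⟨hy1, hy2⟩
      exact ⟨hy1.1, hy2.2⟩
    have e1 : δ (k+1) ^ (-t) = r ^ (-t) * (2:ℝ) ^ (((k:ℝ)+1)*t) := by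
      rw [hδr (k+1), Real.mul_rpow hr0.le (Real.rpow_nonneg (by norm_num) _),
        ← Real.rpow_mul (by norm_num : (0:ℝ) ≤ 2)]
      congr 2
      push_cast
      ring
    have e2 : δ k ^ ((n:ℝ)-d) = r ^ ((n:ℝ)-d) * (2:ℝ) ^ (-(k:ℝ)*((n:ℝ)-d)) := by
      rw [hδr k, Real.mul_rpow hr0.le (Real.rpow_nonneg (by norm_num) _),
        ← Real.rpow_mul (by norm_num : (0:ℝ) ≤ 2)]
    have e3 : q ^ k = (2:ℝ) ^ ((t+d-(n:ℝ))*(k:ℝ)) := by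
      rw [hq, ← Real.rpow_natCast ((2:ℝ) ^ (t + d - (n:ℝ))) k,
        ← Real.rpow_mul (by norm_num : (0:ℝ) ≤ 2)]
    have e4 : r ^ (-t) * (r ^ ((n:ℝ)-d) * r ^ d) = r ^ ((n:ℝ)-t) := by
      rw [← Real.rpow_add hr0, ← Real.rpow_add hr0]
      congr 1
      ring
    have e5 : (2:ℝ) ^ (((k:ℝ)+1)*t) * (2:ℝ) ^ (-(k:ℝ)*((n:ℝ)-d)) =
        (2:ℝ) ^ t * (2:ℝ) ^ ((t+d-(n:ℝ))*(k:ℝ)) := by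
      rw [← Real.rpow_add two_pos, ← Real.rpow_add two_pos]
      congr 1
      ring
    have harith : δ (k+1) ^ (-t) * (C₀ * δ k ^ ((n:ℝ)-d) * r ^ d) =
        C₀ * 2 ^ t * r ^ ((n:ℝ)-t) * q ^ k := by
      calc δ (k+1) ^ (-t) * (C₀ * δ k ^ ((n:ℝ)-d) * r ^ d)
          = C₀ * (r ^ (-t) * (r ^ ((n:ℝ)-d) * r ^ d)) *
              ((2:ℝ) ^ (((k:ℝ)+1)*t) * (2:ℝ) ^ (-(k:ℝ)*((n:ℝ)-d))) := by
            rw [e1, e2]; ring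
        _ = C₀ * r ^ ((n:ℝ)-t) * ((2:ℝ) ^ t * (2:ℝ) ^ ((t+d-(n:ℝ))*(k:ℝ))) := by
            rw [e4, e5]
        _ = C₀ * 2 ^ t * r ^ ((n:ℝ)-t) * q ^ k := by
            rw [e3]; ring
    calc (∫⁻ y in A k, ENNReal.ofReal (Metric.infDist y F) ^ (-t))
        ≤ ENNReal.ofReal (δ (k+1) ^ (-t)) * ENNReal.ofReal (C₀ * δ k ^ ((n:ℝ)-d) * r ^ d) :=
          step1.trans (mul_le_mul_right step2 _)
      _ = ENNReal.ofReal (δ (k+1) ^ (-t) * (C₀ * δ k ^ ((n:ℝ)-d) * r ^ d)) :=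
          (ENNReal.ofReal_mul (Real.rpow_nonneg hδk1.le _)).symm
      _ = ENNReal.ofReal (C₀ * 2 ^ t * r ^ ((n:ℝ)-t) * q ^ k) := by rw [harith]
      _ = ENNReal.ofReal (C₀ * 2 ^ t * r ^ ((n:ℝ)-t)) * ENNReal.ofReal q ^ k := by
          rw [ENNReal.ofReal_mul (by positivity), ENNReal.ofReal_pow hq0.le]
  calc (∫⁻ y in Metric.closedBall x r \ F, ENNReal.ofReal (Metric.infDist y F) ^ (-t))
      ≤ ∫⁻ y in ⋃ k, A k, ENNReal.ofReal (Metric.infDist y F) ^ (-t) :=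
        lintegral_mono_set hcover
    _ ≤ ∑' k, ∫⁻ y in A k, ENNReal.ofReal (Metric.infDist y F) ^ (-t) :=
        lintegral_iUnion_le _ _
    _ ≤ ∑' k : ℕ, ENNReal.ofReal (C₀ * 2 ^ t * r ^ ((n:ℝ) - t)) * ENNReal.ofReal q ^ k :=
        ENNReal.tsum_le_tsum key
    _ = ENNReal.ofReal (C₀ * 2 ^ t * r ^ ((n:ℝ) - t)) * (1 - ENNReal.ofReal q)⁻¹ := by
        rw [ENNReal.tsum_mul_left, ENNReal.tsum_geometric]
    _ = ENNReal.ofReal (C₀ * 2 ^ t * (1 - q)⁻¹ * r ^ ((n:ℝ) - t)) := by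
        rw [← ENNReal.ofReal_one, ← ENNReal.ofReal_sub 1 hq0.le,
          ← ENNReal.ofReal_inv_of_pos (by linarith), ← ENNReal.ofReal_mul (by positivity)]
        congr 1
        ring
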